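/- Let P = (x_1^{δ₂} + ··· + x_r^{δ₂})^{δ₁} ∈ S^d C^r with d = δ₁δ₂. For multidegrees α = (α_1,...,α_r) and η = (η_1,...,η_r) each summing to k, the images P_{k,d-k}(y^α) and P_{k,d-k}(y^η) have the same support (set of monomials with nonzero coefficient) if and only if α_i ≡ η_i (mod δ₂) for each i = 1,...,r. -/

import Mathlib

open MvPolynomial TensorProduct

/-- The iterated partial-derivative operator `∂^α`. -/
noncomputable def Dop {m : ℕ} (α : Fin m → ℕ) :
    Module.End ℂ (MvPolynomial (Fin m) ℂ) :=
  (List.ofFn fun i : Fin m =>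
    (((pderiv i).toLinearMap : Module.End ℂ (MvPolynomial (Fin m) ℂ)) ^ (α i))).prod

/-- The flattening of `P`, sending a constant-coefficient differential operator
(encoded by a polynomial in the dual variables via the monomial basis) to its
application to `P`.  Restricted to homogeneous operators of degree `k` this is
the catalecticant `P_{k,d-k} : S^k V^* → S^{d-k} V`. -/
noncomputable def flat {m : ℕ} (P : MvPolynomial (Fin m) ℂ) :
    MvPolynomial (Fin m) ℂ →ₗ[ℂ] MvPolynomial (Fin m) ℂ :=
  (MvPolynomial.basisMonomials (Fin m) ℂ).constr ℂ fun α => Dop (⇑α) P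

lemma coeff_pderiv_aux {r : ℕ} (i : Fin r) (f : MvPolynomial (Fin r) ℂ) (m : Fin r →₀ ℕ) :
    coeff m (pderiv i f) = (m i + 1 : ℕ) * coeff (m + Finsupp.single i 1) f := by
  induction f using MvPolynomial.induction_on' with
  | monomial s a =>
    rw [pderiv_monomial, coeff_monomial, coeff_monomial]
    by_cases h : s = m + Finsupp.single i 1
    · subst h
      have h1 : m + Finsupp.single i 1 - Finsupp.single i 1 = m := add_tsub_cancel_right _ _
      have h2 : ((m + Finsupp.single i 1 : Fin r →₀ ℕ)) i = m i + 1 := by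
        rw [Finsupp.add_apply, Finsupp.single_apply]; simp
      rw [if_pos h1, if_pos rfl, h2]; push_cast; ring
    · rw [if_neg h]
      by_cases h2 : s - Finsupp.single i 1 = m
      · have hsi : s i = 0 := by
          by_contra hsi
          apply h
          ext j
          have := DFunLike.congr_fun h2 j
          rw [Finsupp.tsub_apply, Finsupp.single_apply] at this
          rw [Finsupp.add_apply, Finsupp.single_apply]
          by_cases hj : i = j
          · subst hj; simp at this ⊢; omega
          · simp [hj] at this ⊢; omega
        simp [hsi]
      · simp [h2]
  | add p q hp hq => simp only [map_add, coeff_add, hp, hq]; ring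

lemma mem_supp_pderiv {r : ℕ} (i : Fin r) (f : MvPolynomial (Fin r) ℂ) (m : Fin r →₀ ℕ) :
    m ∈ (pderiv i f).support ↔ m + Finsupp.single i 1 ∈ f.support := by
  rw [MvPolynomial.mem_support_iff, MvPolynomial.mem_support_iff, coeff_pderiv_aux]
  constructor
  · intro h hc; rw [hc, mul_zero] at h; exact h rfl
  · intro h
    exact mul_ne_zero (by exact_mod_cast Nat.succ_ne_zero (m i)) h

lemma mem_supp_pderiv_pow {r : ℕ} (i : Fin r) (n : ℕ) (f : MvPolynomial (Fin r) ℂ)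
    (m : Fin r →₀ ℕ) :
    m ∈ ((((pderiv i).toLinearMap : Module.End ℂ (MvPolynomial (Fin r) ℂ)) ^ n) f).support
      ↔ m + Finsupp.single i n ∈ f.support := by
  induction n generalizing m with
  | zero => simp
  | succ n ih =>
    rw [pow_succ', Module.End.mul_apply]
    have : ((pderiv i).toLinearMap : Module.End ℂ (MvPolynomial (Fin r) ℂ))
        ((((pderiv i).toLinearMap : Module.End ℂ (MvPolynomial (Fin r) ℂ)) ^ n) f)
        = pderiv i ((((pderiv i).toLinearMap : Module.End ℂ (MvPolynomial (Fin r) ℂ)) ^ n) f) :=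
      rfl
    rw [this, mem_supp_pderiv, ih, add_assoc, ← Finsupp.single_add, add_comm 1 n]

lemma mem_supp_list {r : ℕ} (α : Fin r → ℕ) (L : List (Fin r)) (f : MvPolynomial (Fin r) ℂ)
    (m : Fin r →₀ ℕ) :
    m ∈ (((L.map fun i =>
        (((pderiv i).toLinearMap : Module.End ℂ (MvPolynomial (Fin r) ℂ)) ^ (α i))).prod) f).support
      ↔ m + (L.map fun i => Finsupp.single i (α i)).sum ∈ f.support := by
  induction L generalizing m with
  | nil => simp
  | cons i t ih =>
    simp only [List.map_cons, List.prod_cons, List.sum_cons, Module.End.mul_apply]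
    rw [mem_supp_pderiv_pow, ih, add_assoc]

lemma mem_supp_Dop {r : ℕ} (α : Fin r → ℕ) (f : MvPolynomial (Fin r) ℂ) (m : Fin r →₀ ℕ) :
    m ∈ (Dop α f).support ↔ m + (∑ i, Finsupp.single i (α i)) ∈ f.support := by
  rw [Dop, List.ofFn_eq_map, mem_supp_list, ← List.ofFn_eq_map, List.sum_ofFn]

lemma mem_supp_mul_nat {r : ℕ} (p q : MvPolynomial (Fin r) ℕ) (s : Fin r →₀ ℕ) :
    s ∈ (p * q).support ↔ ∃ a ∈ p.support, ∃ b ∈ q.support, a + b = s := by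
  classical
  rw [MvPolynomial.mem_support_iff, coeff_mul]
  rw [← not_iff_not]
  push_neg
  constructor
  · intro h a ha b hb hab
    rw [MvPolynomial.mem_support_iff] at ha hb
    have := (Finset.sum_eq_zero_iff).mp h (a, b) (Finset.HasAntidiagonal.mem_antidiagonal.mpr hab)
    simp only [Nat.mul_eq_zero] at this
    tauto
  · intro h
    apply Finset.sum_eq_zero
    rintro ⟨a, b⟩ hab
    rw [Finset.HasAntidiagonal.mem_antidiagonal] at hab
    by_cases ha : coeff a p = 0
    · simp [ha]
    by_cases hb : coeff b q = 0
    · simp [hb]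
    exact absurd hab (h a (MvPolynomial.mem_support_iff.mpr ha) b (MvPolynomial.mem_support_iff.mpr hb))

lemma mem_supp_Q {r δ₂ : ℕ} (hδ₂ : 0 < δ₂) (s : Fin r →₀ ℕ) :
    s ∈ (∑ i, X i ^ δ₂ : MvPolynomial (Fin r) ℕ).support ↔ ∃ i, s = Finsupp.single i δ₂ := by
  classical
  rw [MvPolynomial.mem_support_iff, coeff_sum]
  constructor
  · intro h
    obtain ⟨i, -, hi⟩ := Finset.exists_ne_zero_of_sum_ne_zero h
    rw [coeff_X_pow] at hi
    exact ⟨i, by by_contra hc; simp [Ne.symm hc] at hi⟩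
  · rintro ⟨i, rfl⟩
    have : ∀ j : Fin r, coeff (Finsupp.single i δ₂) (X j ^ δ₂ : MvPolynomial (Fin r) ℕ)
        = if j = i then 1 else 0 := by
      intro j
      rw [coeff_X_pow]
      by_cases hj : j = i
      · subst hj; simp
      · rw [if_neg, if_neg hj]
        intro hc
        have := DFunLike.congr_fun hc i
        simp [Finsupp.single_apply, Ne.symm hj] at this
        omega
    simp [this, Finset.sum_ite_eq']

lemma sum_single_apply_eq {r δ₂ : ℕ} (i : Fin r) :
    ∑ j, (Finsupp.single i δ₂) j = δ₂ := by
  simp [Finsupp.single_apply, Finset.sum_ite_eq']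

lemma mem_supp_Qpow {r δ₂ : ℕ} (hδ₂ : 0 < δ₂) (n : ℕ) (s : Fin r →₀ ℕ) :
    s ∈ ((∑ i, X i ^ δ₂ : MvPolynomial (Fin r) ℕ) ^ n).support
      ↔ (∀ i, δ₂ ∣ s i) ∧ ∑ i, s i = δ₂ * n := by
  induction n generalizing s with
  | zero =>
    rw [pow_zero]
    constructor
    · intro h
      have : s = 0 := by
        rw [MvPolynomial.mem_support_iff, MvPolynomial.coeff_one] at h
        by_contra hc
        simp [Ne.symm hc] at h
      subst this
      simp
    · rintro ⟨-, hsum⟩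
      have : s = 0 := by
        ext j
        have := (by simpa using hsum : ∀ i, s i = 0) j
        simpa using this
      subst this
      rw [MvPolynomial.mem_support_iff, MvPolynomial.coeff_one]
      simp
  | succ n ih =>
    rw [pow_succ, mem_supp_mul_nat]
    constructor
    · rintro ⟨a, ha, b, hb, rfl⟩
      obtain ⟨hd, hsum⟩ := ih a |>.mp ha
      obtain ⟨i, rfl⟩ := (mem_supp_Q hδ₂ b).mp hb
      constructor
      · intro j
        rw [Finsupp.add_apply, Finsupp.single_apply]
        rcases eq_or_ne i j with h | h
        · subst h; rw [if_pos rfl]; exact Nat.dvd_add (hd _) dvd_rfl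
        · rw [if_neg h, Nat.add_zero]; exact hd j
      · have : ∑ j, (a + Finsupp.single i δ₂) j = (∑ j, a j) + ∑ j, (Finsupp.single i δ₂) j := by
          simp [Finsupp.add_apply, Finset.sum_add_distrib]
        rw [this, hsum, sum_single_apply_eq]
        ring
    · rintro ⟨hd, hsum⟩
      have hpos : ∃ i, s i ≠ 0 := by
        by_contra hc
        push_neg at hc
        rw [Finset.sum_eq_zero (fun j _ => hc j)] at hsum
        exact (Nat.mul_pos hδ₂ n.succ_pos).ne' hsum.symm
      obtain ⟨i, hi⟩ := hpos
      have hle : δ₂ ≤ s i := Nat.le_of_dvd (Nat.pos_of_ne_zero hi) (hd i)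
      have hab : (s - Finsupp.single i δ₂) + Finsupp.single i δ₂ = s := by
        ext j
        rw [Finsupp.add_apply, Finsupp.tsub_apply, Finsupp.single_apply]
        rcases eq_or_ne i j with h | h
        · subst h; rw [if_pos rfl]; omega
        · simp [h]
      refine ⟨s - Finsupp.single i δ₂, ?_, Finsupp.single i δ₂,
        (mem_supp_Q hδ₂ _).mpr ⟨i, rfl⟩, hab⟩
      rw [ih]
      have hsub : ∀ j, (s - Finsupp.single i δ₂ : Fin r →₀ ℕ) j
          = s j - (Finsupp.single i δ₂) j := fun j => Finsupp.tsub_apply _ _ _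
      constructor
      · intro j
        rw [hsub, Finsupp.single_apply]
        rcases eq_or_ne i j with h | h
        · subst h; rw [if_pos rfl]; exact Nat.dvd_sub (hd _) dvd_rfl
        · simp only [if_neg h, Nat.sub_zero]; exact hd j
      · have h2 : ∑ j, ((s - Finsupp.single i δ₂) + Finsupp.single i δ₂ : Fin r →₀ ℕ) j
            = (∑ j, (s - Finsupp.single i δ₂ : Fin r →₀ ℕ) j)
              + ∑ j, (Finsupp.single i δ₂ : Fin r →₀ ℕ) j := by
          rw [← Finset.sum_add_distrib]
          exact Finset.sum_congr rfl fun j _ => Finsupp.add_apply _ _ _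
        rw [hab, hsum, sum_single_apply_eq] at h2
        have hexp : δ₂ * (n + 1) = δ₂ * n + δ₂ := by ring
        omega

/-- For `P = (x_1^{δ₂} + ⋯ + x_r^{δ₂})^{δ₁}`, two partial derivatives
`∂^α P` and `∂^η P` (with `|α| = |η| = k`, both nonzero) have the same
support iff `α_i ≡ η_i (mod δ₂)` for every `i`. -/
theorem support_flattening_iff (δ₁ δ₂ r k : ℕ) (hδ₁ : 0 < δ₁) (hδ₂ : 0 < δ₂)
    (α η : Fin r → ℕ) (hα : ∑ i, α i = k) (hη : ∑ i, η i = k)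
    (hαne : Dop α ((∑ i, X i ^ δ₂ : MvPolynomial (Fin r) ℂ) ^ δ₁) ≠ 0)
    (hηne : Dop η ((∑ i, X i ^ δ₂ : MvPolynomial (Fin r) ℂ) ^ δ₁) ≠ 0) :
    (Dop α ((∑ i, X i ^ δ₂ : MvPolynomial (Fin r) ℂ) ^ δ₁)).support
        = (Dop η ((∑ i, X i ^ δ₂ : MvPolynomial (Fin r) ℂ) ^ δ₁)).support
      ↔ ∀ i, (δ₂ : ℤ) ∣ (α i : ℤ) - (η i : ℤ) := by
  set P : MvPolynomial (Fin r) ℂ := (∑ i, X i ^ δ₂ : MvPolynomial (Fin r) ℂ) ^ δ₁ with hP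
  -- support of P
  have hPmap : P = MvPolynomial.map (Nat.castRingHom ℂ)
      ((∑ i, X i ^ δ₂ : MvPolynomial (Fin r) ℕ) ^ δ₁) := by
    rw [hP, map_pow, map_sum]
    simp
  have hsuppP : ∀ s : Fin r →₀ ℕ,
      s ∈ P.support ↔ (∀ i, δ₂ ∣ s i) ∧ ∑ i, s i = δ₂ * δ₁ := by
    intro s
    rw [hPmap, MvPolynomial.support_map_of_injective _ Nat.cast_injective,
      mem_supp_Qpow hδ₂]
  -- apply of the finsupp sum
  have happly : ∀ (γ : Fin r → ℕ) (j : Fin r),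
      (∑ i, Finsupp.single i (γ i) : Fin r →₀ ℕ) j = γ j := by
    intro γ j
    rw [Finsupp.finset_sum_apply]
    simp [Finsupp.single_apply, Finset.sum_ite_eq']
  -- characterization of memberships in Dop supports
  have hmem : ∀ (γ : Fin r → ℕ), (∑ i, γ i = k) → ∀ m : Fin r →₀ ℕ,
      m ∈ (Dop γ P).support
        ↔ ((∀ i, δ₂ ∣ m i + γ i) ∧ (∑ i, m i) + k = δ₂ * δ₁) := by
    intro γ hγ m
    rw [mem_supp_Dop, hsuppP]
    have h1 : ∀ j, (m + ∑ i, Finsupp.single i (γ i) : Fin r →₀ ℕ) j = m j + γ j := by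
      intro j; rw [Finsupp.add_apply, happly]
    have h2 : ∑ j, (m + ∑ i, Finsupp.single i (γ i) : Fin r →₀ ℕ) j
        = (∑ j, m j) + k := by
      rw [Finset.sum_congr rfl fun j _ => h1 j, Finset.sum_add_distrib, hγ]
    constructor
    · rintro ⟨hd, hs⟩
      exact ⟨fun i => h1 i ▸ hd i, by rw [← h2, hs]⟩
    · rintro ⟨hd, hs⟩
      exact ⟨fun i => (h1 i).symm ▸ hd i, by rw [h2, hs]⟩
  have key : ∀ (a b c : ℕ), (δ₂ : ℤ) ∣ (b : ℤ) - (c : ℤ) → δ₂ ∣ a + b → δ₂ ∣ a + c := by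
    intro a b c h1 h2
    have h2' : (δ₂ : ℤ) ∣ (a : ℤ) + (b : ℤ) := by
      have := Int.natCast_dvd_natCast.mpr h2
      push_cast at this
      exact this
    have h3 : (δ₂ : ℤ) ∣ ((a + c : ℕ) : ℤ) := by
      push_cast
      have := dvd_sub h2' h1
      have heq : (a : ℤ) + b - ((b : ℤ) - c) = (a : ℤ) + c := by ring
      rwa [heq] at this
    exact_mod_cast h3
  constructor
  · intro hEq i
    have hne : (Dop α P).support.Nonempty :=
      Finset.nonempty_iff_ne_empty.mpr fun h => hαne (MvPolynomial.support_eq_empty.mp h)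
    obtain ⟨m, hm⟩ := hne
    have hmα := (hmem α hα m).mp hm
    have hmη := (hmem η hη m).mp (hEq ▸ hm)
    obtain ⟨a, ha⟩ := hmα.1 i
    obtain ⟨b, hb⟩ := hmη.1 i
    refine ⟨(a : ℤ) - b, ?_⟩
    have ha' : (m i : ℤ) + α i = δ₂ * a := by exact_mod_cast ha
    have hb' : (m i : ℤ) + η i = δ₂ * b := by exact_mod_cast hb
    rw [mul_sub]
    linarith
  · intro hdvd
    ext m
    rw [hmem α hα m, hmem η hη m]
    constructor
    · rintro ⟨hd, hs⟩
      exact ⟨fun i => key (m i) (α i) (η i) (hdvd i) (hd i), hs⟩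
    · rintro ⟨hd, hs⟩
      refine ⟨fun i => key (m i) (η i) (α i) ?_ (hd i), hs⟩
      have := dvd_neg.mpr (hdvd i)
      rwa [neg_sub] at this
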